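/- Let s ≥ 1 and d ≥ 1 be integers and let U_1, …, U_{s-1} be unitary d×d complex matrices. On ℂ^d ⊗ ℂ^s define H = Σ_{x=1}^{s-1} ( U_x ⊗ |x+1⟩⟨x| + U_x⁻¹ ⊗ |x⟩⟨x+1| ). Let P_1 be any d×d matrix and define P_k for k = 2, …, s recursively by P_k = U_{k-1} P_{k-1} U_{k-1}⁻¹, and set P = Σ_{k=1}^{s} P_k ⊗ |k⟩⟨k|. Then P commutes with H: PH = HP. -/

import Mathlib

open Kronecker Matrix

lemma pop_mul_block {s d : ℕ} (P : ℕ → Matrix (Fin d) (Fin d) ℂ)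
    (A : Matrix (Fin d) (Fin d) ℂ) (a b : Fin s) :
    (∑ k : Fin s, (P (k.val + 1)) ⊗ₖ Matrix.single k k (1 : ℂ)) *
      (A ⊗ₖ Matrix.single a b (1 : ℂ)) =
      (P (a.val + 1) * A) ⊗ₖ Matrix.single a b (1 : ℂ) := by
  rw [Finset.sum_mul, Finset.sum_eq_single a]
  · rw [← Matrix.mul_kronecker_mul, Matrix.single_mul_single_same, one_mul]
  · intro k _ hk
    rw [← Matrix.mul_kronecker_mul]
    rw [Matrix.single_mul_single_of_ne (h := hk)]
    simp
  · intro h; exact absurd (Finset.mem_univ a) h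

lemma block_mul_pop {s d : ℕ} (P : ℕ → Matrix (Fin d) (Fin d) ℂ)
    (A : Matrix (Fin d) (Fin d) ℂ) (a b : Fin s) :
    (A ⊗ₖ Matrix.single a b (1 : ℂ)) *
      (∑ k : Fin s, (P (k.val + 1)) ⊗ₖ Matrix.single k k (1 : ℂ)) =
      (A * P (b.val + 1)) ⊗ₖ Matrix.single a b (1 : ℂ) := by
  rw [Finset.mul_sum, Finset.sum_eq_single b]
  · rw [← Matrix.mul_kronecker_mul, Matrix.single_mul_single_same, one_mul]
  · intro k _ hk
    rw [← Matrix.mul_kronecker_mul]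
    rw [Matrix.single_mul_single_of_ne (h := Ne.symm hk)]
    simp
  · intro h; exact absurd (Finset.mem_univ b) h

/-- Peres' constant of the motion: the operator
`P = Σ_{k=1}^{s} P_k ⊗ |k⟩⟨k|` commutes with Feynman's Hamiltonian
`H = Σ_{x=1}^{s-1} ( U_x ⊗ |x+1⟩⟨x| + U_x⁻¹ ⊗ |x⟩⟨x+1| )` on `ℂ^d ⊗ ℂ^s`,
whenever the matrices `P_k` satisfy the recursion `P_k = U_{k-1} P_{k-1} U_{k-1}⁻¹`.
Cursor sites are represented 0-based: the paper's site `x ∈ {1,…,s}` is the index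
`x - 1 : Fin s`, and `U, P : ℕ → _` are evaluated at the paper's (1-based) labels. -/
theorem peres_constant_of_motion (s d : ℕ) (hs : 1 ≤ s) (hd : 1 ≤ d)
    (U : ℕ → Matrix (Fin d) (Fin d) ℂ)
    (hU : ∀ x, 1 ≤ x → x ≤ s - 1 → U x ∈ Matrix.unitaryGroup (Fin d) ℂ)
    (P : ℕ → Matrix (Fin d) (Fin d) ℂ)
    (hP : ∀ k, 2 ≤ k → k ≤ s → P k = U (k - 1) * P (k - 1) * (U (k - 1))⁻¹) :
    letI H : Matrix (Fin d × Fin s) (Fin d × Fin s) ℂ :=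
      ∑ x : Fin (s - 1),
        ((U (x.val + 1)) ⊗ₖ
            Matrix.single (⟨x.val + 1, by have := x.isLt; omega⟩ : Fin s)
              (⟨x.val, by have := x.isLt; omega⟩ : Fin s) (1 : ℂ) +
          (U (x.val + 1))⁻¹ ⊗ₖ
            Matrix.single (⟨x.val, by have := x.isLt; omega⟩ : Fin s)
              (⟨x.val + 1, by have := x.isLt; omega⟩ : Fin s) (1 : ℂ))
    letI Pop : Matrix (Fin d × Fin s) (Fin d × Fin s) ℂ :=
      ∑ k : Fin s, (P (k.val + 1)) ⊗ₖ Matrix.single k k (1 : ℂ)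
    Pop * H = H * Pop := by
  rw [Finset.mul_sum, Finset.sum_mul]
  refine Finset.sum_congr rfl (fun x _ => ?_)
  have hx := x.isLt
  -- invertibility of U (x+1)
  have hmem := hU (x.val + 1) (by omega) (by omega)
  have hright : U (x.val + 1) * star (U (x.val + 1)) = 1 :=
    (Matrix.mem_unitaryGroup_iff).mp hmem
  have hdet : IsUnit (U (x.val + 1)).det :=
    Matrix.isUnit_det_of_right_inverse hright
  have hUinv : (U (x.val + 1))⁻¹ * U (x.val + 1) = 1 :=
    Matrix.nonsing_inv_mul _ hdet
  have hUinv' : U (x.val + 1) * (U (x.val + 1))⁻¹ = 1 :=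
    Matrix.mul_nonsing_inv _ hdet
  have hrec : P (x.val + 2) = U (x.val + 1) * P (x.val + 1) * (U (x.val + 1))⁻¹ := by
    have := hP (x.val + 2) (by omega) (by omega)
    simpa using this
  have key1 : P (x.val + 2) * U (x.val + 1) = U (x.val + 1) * P (x.val + 1) := by
    rw [hrec, mul_assoc, hUinv, mul_one]
  have key2 : P (x.val + 1) * (U (x.val + 1))⁻¹ = (U (x.val + 1))⁻¹ * P (x.val + 2) := by
    rw [hrec, ← mul_assoc, ← mul_assoc, hUinv, one_mul]
  rw [mul_add, add_mul, pop_mul_block, pop_mul_block, block_mul_pop, block_mul_pop]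
  simp only []
  rw [key1, key2]
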